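/- Define T_n to be F_n with its last two letters exchanged (i.e., T_n = W_n·(vu) where F_n = W_n·(uv)). Then for all n ≥ 2, T_{n+1} = F_n · T_{n-1}. -/

import Mathlib

/-- The two-letter alphabet: `A` and `B`. -/
inductive Letter : Type
  | A : Letter
  | B : Letter
  deriving DecidableEq, Repr

open Letter

/-- The Fibonacci substitution θ : a → ab, b → a. -/
def theta : Letter → List Letter
  | A => [A, B]
  | B => [A]

/-- Extension of the substitution to words, by concatenation. -/
def substWord (w : List Letter) : List Letter := w.flatMap theta

/-- The n-th finite Fibonacci word F_n = θ^n(a). -/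
def FibWord (n : ℕ) : List Letter := substWord^[n] [A]

/-- The infinite Fibonacci word (each F_n is a prefix of all later ones,
and `FibWord (k+1)` has length `fib (k+3) ≥ k+1`, so index `k` is defined). -/
def FibSeq (k : ℕ) : Letter := (FibWord (k + 1)).getD k A

/-- `Wword n` is the Fibonacci word F_n with its final two letters removed. -/
def Wword (n : ℕ) : List Letter := (FibWord n).dropLast.dropLast

/-- The final two letters `uv` of F_n. -/
def lastTwo (n : ℕ) : List Letter := (FibWord n).drop ((FibWord n).length - 2)

/-- `Tword n` is F_n with its final two letters exchanged: if F_n = W_n·(uv)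
then T_n = W_n·(vu). -/
def Tword (n : ℕ) : List Letter := Wword n ++ (lastTwo n).reverse

lemma substWord_append (a b : List Letter) :
    substWord (a ++ b) = substWord a ++ substWord b := by
  simp [substWord]

lemma FibWord_succ (n : ℕ) : FibWord (n + 1) = substWord (FibWord n) := by
  simp [FibWord, Function.iterate_succ_apply']

lemma FibWord_rec (k : ℕ) : FibWord (k + 2) = FibWord (k + 1) ++ FibWord k := by
  induction k with
  | zero => rfl
  | succ k ih =>
      rw [show k + 1 + 2 = (k + 2) + 1 from rfl, FibWord_succ (k + 2), ih,
        substWord_append, ← FibWord_succ, ← FibWord_succ, ih]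

lemma FibWord_decomp (k : ℕ) : ∃ m u v, FibWord (k + 1) = m ++ [u, v] := by
  induction k with
  | zero => exact ⟨[], A, B, rfl⟩
  | succ k ih =>
      obtain ⟨m, u, v, h⟩ := ih
      rw [FibWord_succ, h, substWord_append]
      cases v
      · exact ⟨substWord m ++ theta u, A, B, by simp [substWord, theta]⟩
      · cases u
        · exact ⟨substWord m ++ [A], B, A, by simp [substWord, theta]⟩
        · exact ⟨substWord m, A, A, by simp [substWord, theta]⟩

lemma swap_append (a m : List Letter) (u v : Letter) :
    ((a ++ (m ++ [u, v])).dropLast.dropLast ++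
      ((a ++ (m ++ [u, v])).drop ((a ++ (m ++ [u, v])).length - 2)).reverse)
      = a ++ (m ++ [v, u]) := by
  have h1 : a ++ (m ++ [u, v]) = (a ++ m) ++ [u, v] := by simp
  rw [h1]
  have h2 : ((a ++ m) ++ [u, v]).dropLast.dropLast = a ++ m := by
    rw [List.dropLast_append_of_ne_nil (by simp)]
    simp [List.dropLast_append_of_ne_nil]
  have h3 : ((a ++ m) ++ [u, v]).length - 2 = (a ++ m).length := by simp; omega
  rw [h2, h3, List.drop_left]
  simp

/-- End letter pair reversal rule: T_{n+1} = F_n · T_{n-1} for n ≥ 2. -/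
theorem fib_word_T_recursion (n : ℕ) (hn : 2 ≤ n) :
    Tword (n + 1) = FibWord n ++ Tword (n - 1) := by
  obtain ⟨j, rfl⟩ : ∃ j, n = j + 2 := ⟨n - 2, by omega⟩
  obtain ⟨m, u, v, h⟩ := FibWord_decomp j
  have hr : FibWord (j + 2 + 1) = FibWord (j + 2) ++ (m ++ [u, v]) := by
    rw [FibWord_rec (j + 1), h]
  show Wword (j + 3) ++ (lastTwo (j + 3)).reverse = _
  rw [Wword, lastTwo, hr, swap_append]
  have : j + 2 - 1 = j + 1 := rfl
  rw [this, Tword, Wword, lastTwo, h, ← List.nil_append (m ++ [u, v]),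
    swap_append]
  simp
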